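/- arXiv:1402.3194 — 2 statements merged into one kernel-verified Lean document; each statement's English description precedes it below -/
import Mathlib

section
/- Let γ, g, h₁, h₂ > 0 and u=(h₁,h₂,u₁,u₂,v₁,v₂). With u₀ := u₁, the matrix S_x(u) is positive-definite if and only if γ ∈ (0,1), h₁ > 0, h₂ > 0, and (1−γ)g·h₂ > (u₂−u₁)². -/
open Matrix
noncomputable def Sx (g γ h₁ h₂ u₁ u₂ : ℝ) : Matrix (Fin 6) (Fin 6) ℝ :=
  !![g * γ, g * γ, 0, 0, 0, 0;
     g * γ, g, 0, u₂ - u₁, 0, 0;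
     0, 0, γ * h₁, 0, 0, 0;
     0, u₂ - u₁, 0, h₂, 0, 0;
     0, 0, 0, 0, γ * h₁, 0;
     0, 0, 0, 0, 0, h₂]

lemma cons_val_five' {α : Type*} (a : α) (u : Fin 5 → α) : vecCons a u 5 = u 4 := rfl

lemma quad (g γ h₁ h₂ u₁ u₂ : ℝ) (x : Fin 6 → ℝ) :
    x ⬝ᵥ (Sx g γ h₁ h₂ u₁ u₂).mulVec x =
      g * γ * (x 0 + x 1)^2 + (1 - γ) * g * (x 1)^2 + 2 * (u₂ - u₁) * x 1 * x 3
        + h₂ * (x 3)^2 + γ * h₁ * (x 2)^2 + γ * h₁ * (x 4)^2 + h₂ * (x 5)^2 := by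
  simp [Sx, dotProduct, mulVec, Fin.sum_univ_six, cons_val_five', Matrix.vecHead, Matrix.vecTail]
  ring

theorem Sx_posDef_iff (g γ h₁ h₂ u₁ u₂ v₁ v₂ : ℝ)
    (hg : 0 < g) (hγ : 0 < γ) (hh₁ : 0 < h₁) (hh₂ : 0 < h₂) :
    (Sx g γ h₁ h₂ u₁ u₂).PosDef ↔
      (γ ∈ Set.Ioo (0:ℝ) 1 ∧ 0 < h₁ ∧ 0 < h₂ ∧ (u₂ - u₁)^2 < (1 - γ) * g * h₂) := by
  set d := u₂ - u₁ with hd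
  constructor
  · rw [posDef_iff_dotProduct_mulVec]
    rintro ⟨-, hpos⟩
    have h1 : (0:ℝ) < (1 - γ) * g := by
      have := hpos (x := ![-1, 1, 0, 0, 0, 0]) (by
        intro h; simpa using congrFun h 1)
      rw [show (star ![(-1:ℝ), 1, 0, 0, 0, 0]) = ![(-1:ℝ), 1, 0, 0, 0, 0] from rfl, quad] at this
      norm_num [cons_val_five', Matrix.cons_val_two, Matrix.cons_val_three, Matrix.cons_val_four, Matrix.vecHead, Matrix.vecTail] at this
      linarith
    have hγ1 : γ < 1 := by nlinarith
    have h2 : d ^ 2 < (1 - γ) * g * h₂ := by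
      have := hpos (x := ![-h₂, h₂, 0, -d, 0, 0]) (by
        intro h; have := congrFun h 1; simp at this; exact absurd this hh₂.ne')
      rw [show (star ![-h₂, h₂, (0:ℝ), -d, 0, 0]) = ![-h₂, h₂, (0:ℝ), -d, 0, 0] from rfl,
        quad] at this
      rw [← hd] at this
      norm_num [cons_val_five', Matrix.cons_val_two, Matrix.cons_val_three, Matrix.cons_val_four, Matrix.vecHead, Matrix.vecTail] at this
      nlinarith
    exact ⟨⟨hγ, hγ1⟩, hh₁, hh₂, h2⟩
  · rintro ⟨⟨-, hγ1⟩, -, -, hlt⟩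
    refine posDef_iff_dotProduct_mulVec.mpr ⟨?_, ?_⟩
    · ext i j
      fin_cases i <;> fin_cases j <;> simp [Sx, Matrix.vecHead, Matrix.vecTail, cons_val_five']
    · intro x hx
      rw [show (star x) = x from rfl, quad, ← hd]
      have hpos2 : 0 < (1 - γ) * g - d^2 / h₂ := by
        rw [sub_pos, div_lt_iff₀ hh₂]; linarith
      have key : (1 - γ) * g * (x 1)^2 + 2 * d * x 1 * x 3 + h₂ * (x 3)^2 =
          (h₂ * x 3 + d * x 1)^2 / h₂ + ((1 - γ) * g - d^2 / h₂) * (x 1)^2 := by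
        field_simp; ring
      rw [show g * γ * (x 0 + x 1)^2 + (1 - γ) * g * (x 1)^2 + 2 * d * x 1 * x 3
            + h₂ * (x 3)^2 + γ * h₁ * (x 2)^2 + γ * h₁ * (x 4)^2 + h₂ * (x 5)^2
          = g * γ * (x 0 + x 1)^2 + ((1 - γ) * g * (x 1)^2 + 2 * d * x 1 * x 3 + h₂ * (x 3)^2)
            + γ * h₁ * (x 2)^2 + γ * h₁ * (x 4)^2 + h₂ * (x 5)^2 by ring, key]
      have t2 : 0 ≤ (h₂ * x 3 + d * x 1)^2 / h₂ := div_nonneg (sq_nonneg _) hh₂.le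
      have t0 : 0 ≤ g * γ * (x 0 + x 1)^2 := mul_nonneg (mul_pos hg hγ).le (sq_nonneg _)
      have t1 : 0 ≤ ((1 - γ) * g - d^2 / h₂) * (x 1)^2 := mul_nonneg hpos2.le (sq_nonneg _)
      have t3 : 0 ≤ γ * h₁ * (x 2)^2 := mul_nonneg (mul_pos hγ hh₁).le (sq_nonneg _)
      have t4 : 0 ≤ γ * h₁ * (x 4)^2 := mul_nonneg (mul_pos hγ hh₁).le (sq_nonneg _)
      have t5 : 0 ≤ h₂ * (x 5)^2 := mul_nonneg hh₂.le (sq_nonneg _)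
      by_cases hx1 : x 1 = 0
      · have hcases : x 0 ≠ 0 ∨ x 2 ≠ 0 ∨ x 3 ≠ 0 ∨ x 4 ≠ 0 ∨ x 5 ≠ 0 := by
          by_contra h
          push_neg at h
          apply hx
          ext i
          fin_cases i <;> simp [h.1, hx1, h.2.1, h.2.2.1, h.2.2.2.1, h.2.2.2.2]
        rw [hx1]
        have t2' : 0 ≤ (h₂ * x 3 + d * 0)^2 / h₂ := div_nonneg (sq_nonneg _) hh₂.le
        have t0' : 0 ≤ g * γ * (x 0 + 0)^2 := mul_nonneg (mul_pos hg hγ).le (sq_nonneg _)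
        have t1' : 0 ≤ ((1 - γ) * g - d^2 / h₂) * (0:ℝ)^2 := mul_nonneg hpos2.le (sq_nonneg _)
        rcases hcases with h|h|h|h|h
        · have : 0 < g * γ * (x 0 + 0)^2 := by
            have := sq_pos_of_ne_zero h
            have : (0:ℝ) < (x 0 + 0)^2 := by simpa using this
            exact mul_pos (mul_pos hg hγ) this
          linarith
        · have : 0 < γ * h₁ * (x 2)^2 := mul_pos (mul_pos hγ hh₁) (sq_pos_of_ne_zero h)
          linarith
        · have : 0 < (h₂ * x 3 + d * 0)^2 / h₂ := by
            apply div_pos _ hh₂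
            have : h₂ * x 3 + d * 0 ≠ 0 := by
              simpa using mul_ne_zero hh₂.ne' h
            exact sq_pos_of_ne_zero this
          linarith
        · have : 0 < γ * h₁ * (x 4)^2 := mul_pos (mul_pos hγ hh₁) (sq_pos_of_ne_zero h)
          linarith
        · have : 0 < h₂ * (x 5)^2 := mul_pos hh₂ (sq_pos_of_ne_zero h)
          linarith
      · have : 0 < ((1 - γ) * g - d^2 / h₂) * (x 1)^2 :=
          mul_pos hpos2 (sq_pos_of_ne_zero hx1)
        linarith
end

section
/- The characteristic polynomial of the 6×6 matrix A_x(u) factors as det(A_x(u) − μI₆) = (μ−u₁)(μ−u₂)·Q(μ), where Q(μ) = ((μ−u₁)²−g h₁)((μ−u₂)²−g h₂) − γ g² h₁ h₂. -/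
open Matrix

noncomputable def Ax (g γ h₁ h₂ u₁ u₂ v₁ v₂ : ℝ) : Matrix (Fin 6) (Fin 6) ℝ :=
  !![u₁, 0, h₁, 0, 0, 0;
     0, u₂, 0, h₂, 0, 0;
     g, g, u₁, 0, 0, 0;
     γ * g, g, 0, u₂, 0, 0;
     0, 0, 0, 0, u₁, 0;
     0, 0, 0, 0, 0, u₂]

lemma cons_val_five'_s6 (x : ℝ) (u : Fin 5 → ℝ) : Matrix.vecCons x u 5 = u 4 := rfl

set_option maxRecDepth 40000 in
set_option maxHeartbeats 4000000 in
theorem charpoly_factorization (g γ h₁ h₂ u₁ u₂ v₁ v₂ : ℝ) (μ : ℝ) :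
    (Ax g γ h₁ h₂ u₁ u₂ v₁ v₂ - μ • (1 : Matrix (Fin 6) (Fin 6) ℝ)).det =
      (μ - u₁) * (μ - u₂) *
        (((μ - u₁)^2 - g * h₁) * ((μ - u₂)^2 - g * h₂) - γ * g^2 * h₁ * h₂) := by
  rw [show (Ax g γ h₁ h₂ u₁ u₂ v₁ v₂ - μ • (1 : Matrix (Fin 6) (Fin 6) ℝ)) =
    !![u₁-μ, 0, h₁, 0, 0, 0;
     0, u₂-μ, 0, h₂, 0, 0;
     g, g, u₁-μ, 0, 0, 0;
     γ * g, g, 0, u₂-μ, 0, 0;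
     0, 0, 0, 0, u₁-μ, 0;
     0, 0, 0, 0, 0, u₂-μ] from by
      ext i j
      fin_cases i <;> fin_cases j <;>
        simp [Ax, Matrix.one_apply, cons_val_five'_s6, Matrix.cons_val_four] <;> ring]
  simp [Matrix.det_succ_row_zero, Fin.sum_univ_succ, Fin.succAbove,
    cons_val_five'_s6, Matrix.cons_val_four]
  ring
end
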